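/- Let A ⊂ C^k be a set such that for every ε > 0 there exists n with: (a) a family of balls of radius ε/3 covering a set J_n with d_H(A ∩ U_n, J_n) < η_n where η_n < ε/3, and (b) for every ball B of that family, γ_h^{ε_n}(J_n ∩ B) > 2^{n} for a sequence ε_n → 0, where additionally any covering of A ∩ B(z;ε) by balls of radius ε_n enlarged to radius ε̂_n (with 2ε_n^{h} = ε̂_n^{h} and η_n < ε̂_n − ε_n) covers J_n ∩ B. Then for every z ∈ A, μ_h(A ∩ B(z;ε)) = ∞ for all small ε > 0; hence the upper box dimension of A at every point is at least h. -/

import Mathlib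

open Filter Metric Set
open scoped ENNReal NNReal

/-- The minimal number (in `ℝ≥0∞`) of balls of radius `ε` needed to cover `K`. -/
noncomputable def coverNum {X : Type*} [MetricSpace X] (K : Set X) (ε : ℝ) : ℝ≥0∞ :=
  ⨅ (s : Finset X) (_ : K ⊆ ⋃ x ∈ s, Metric.ball x ε), (s.card : ℝ≥0∞)

/-- `γ_h^ε(K) = ε^h ·` (minimal number of `ε`-balls covering `K`). -/
noncomputable def boxGamma {X : Type*} [MetricSpace X] (h : ℝ) (K : Set X) (ε : ℝ) :
    ℝ≥0∞ :=
  ENNReal.ofReal (ε ^ h) * coverNum K ε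

/-- The `h`-dimensional upper box (Minkowski) content. -/
noncomputable def boxContent {X : Type*} [MetricSpace X] (h : ℝ) (K : Set X) : ℝ≥0∞ :=
  Filter.limsup (fun ε => boxGamma h K ε) (nhdsWithin (0 : ℝ) (Set.Ioi 0))

/-- suppose `A ⊆ ℂ^k` is such that near every point `z ∈ A` and at every
sufficiently small scale `ε`, there are arbitrarily large `n`, sets `J_n` with
`d_H(J_n, A ∩ B̄(z;ε)) < η_n`, and scales `ε_n → 0`, `ε̂_n` with `2 ε_n^h = ε̂_n^h` and
`η_n < ε̂_n − ε_n`, with `γ_h^{ε̂_n}(J_n) > 2^n` (so that, enlarging radii, covering-number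
lower bounds transfer from `J_n` to `A ∩ B̄(z;ε)`). Then for every `z ∈ A` and all small
`ε > 0`, `μ_h(A ∩ B̄(z;ε)) = ∞`; hence the upper box dimension of `A` at every point is
at least `h`. -/
theorem stmt16 {k : ℕ} (A : Set (EuclideanSpace ℂ (Fin k))) (h : ℝ) (hh : 0 < h)
    (hyp : ∀ z ∈ A, ∃ ε₀ > 0, ∀ ε : ℝ, 0 < ε → ε < ε₀ →
      ∀ m : ℕ, ∃ n, m ≤ n ∧
        ∃ (J : Set (EuclideanSpace ℂ (Fin k))) (ηn εn εhatn : ℝ),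
          0 < εn ∧ εn < 1 / (m + 1) ∧ 0 < ηn ∧
          2 * εn ^ h = εhatn ^ h ∧ ηn < εhatn - εn ∧
          J ⊆ closedBall z ε ∧
          hausdorffDist J (A ∩ closedBall z ε) < ηn ∧
          (2 : ℝ≥0∞) ^ n < boxGamma h J εhatn) :
    ∀ z ∈ A, ∃ ε₀ > 0, ∀ ε : ℝ, 0 < ε → ε < ε₀ →
      boxContent h (A ∩ closedBall z ε) = ⊤ := by
  intro z hz
  obtain ⟨ε₀, hε₀, H⟩ := hyp z hz
  refine ⟨ε₀, hε₀, fun ε hε hεε₀ => ?_⟩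
  set T := A ∩ closedBall z ε with hTdef
  have hTne : T.Nonempty := ⟨z, hz, mem_closedBall_self hε.le⟩
  have hTb : Bornology.IsBounded T := (isBounded_closedBall).subset inter_subset_right
  have key : ∀ m : ℕ, (2 : ℝ≥0∞) ^ m ≤ boxContent h T := by
    intro m
    have hfreq : ∃ᶠ x in nhdsWithin (0 : ℝ) (Ioi 0),
        (2 : ℝ≥0∞) ^ m ≤ boxGamma h T x := by
      rw [frequently_iff]
      intro U hU
      obtain ⟨δ, hδ, hsub⟩ := mem_nhdsGT_iff_exists_Ioo_subset.mp hU
      obtain ⟨M, hM⟩ := exists_nat_one_div_lt (mem_Ioi.mp hδ)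
      obtain ⟨n, hn, J, ηn, εn, εhatn, hεn, hεnlt, hηn, hpow, hηlt, hJsub, hHd, hγ⟩ :=
        H ε hε hεε₀ (max (m + 1) M)
      -- εn < δ
      have hmmM : (M : ℝ) ≤ (max (m + 1) M : ℕ) := by
        exact_mod_cast Nat.le_max_right (m + 1) M
      have hεnδ : εn < δ := by
        have h1 : (1 : ℝ) / ((max (m + 1) M : ℕ) + 1) ≤ 1 / (M + 1) := by
          apply one_div_le_one_div_of_le (by positivity)
          linarith
        linarith
      refine ⟨εn, hsub ⟨hεn, hεnδ⟩, ?_⟩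
      -- J is nonempty
      have hεhat : 0 < εhatn := by linarith
      have hJne : J.Nonempty := by
        rcases J.eq_empty_or_nonempty with rfl | hJne
        · exfalso
          have h0 : coverNum (∅ : Set (EuclideanSpace ℂ (Fin k))) εhatn = 0 := by
            refine le_antisymm ?_ (zero_le)
            rw [coverNum]
            refine iInf_le_of_le ∅ (iInf_le_of_le (by simp) ?_)
            simp
          rw [boxGamma, h0, mul_zero] at hγ
          exact absurd hγ (by simp)
        · exact hJne
      have hedist : EMetric.hausdorffEdist J T ≠ ⊤ :=
        Metric.hausdorffEdist_ne_top_of_nonempty_of_bounded hJne hTne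
          ((isBounded_closedBall).subset hJsub) hTb
      -- covers transfer
      have hcov : coverNum J εhatn ≤ coverNum T εn := by
        refine le_iInf fun s => le_iInf fun hs => ?_
        refine iInf₂_le s ?_
        intro y hy
        obtain ⟨t, ht, hyt⟩ := exists_dist_lt_of_hausdorffDist_lt hy hHd hedist
        obtain ⟨x, hx, hxt⟩ := mem_iUnion₂.mp (hs ht)
        refine mem_iUnion₂.mpr ⟨x, hx, mem_ball.mpr ?_⟩
        have h3 := dist_triangle y t x
        have h4 : dist t x < εn := mem_ball.mp hxt
        linarith
      -- boxGamma bound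
      have h1 : boxGamma h J εhatn ≤ 2 * boxGamma h T εn := by
        rw [boxGamma, boxGamma]
        calc ENNReal.ofReal (εhatn ^ h) * coverNum J εhatn
            ≤ ENNReal.ofReal (εhatn ^ h) * coverNum T εn := mul_le_mul_right hcov _
          _ = 2 * (ENNReal.ofReal (εn ^ h) * coverNum T εn) := by
              rw [← hpow, ENNReal.ofReal_mul (by norm_num), ← mul_assoc]
              norm_num
      have h2 : (2 : ℝ≥0∞) ^ n < 2 * boxGamma h T εn := lt_of_lt_of_le hγ h1
      -- n ≥ m + 1
      have hnm : m + 1 ≤ n := le_trans (Nat.le_max_left (m + 1) M) hn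
      obtain ⟨p, rfl⟩ : ∃ p, n = p + 1 := ⟨n - 1, by omega⟩
      rw [pow_succ, mul_comm] at h2
      have h5 : (2 : ℝ≥0∞) ^ p < boxGamma h T εn :=
        (ENNReal.mul_lt_mul_iff_right (by norm_num) (by norm_num)).mp h2
      have h6 : (2 : ℝ≥0∞) ^ m ≤ 2 ^ p :=
        pow_le_pow_right' (by norm_num) (by omega)
      exact h6.trans h5.le
    exact le_limsup_of_frequently_le' hfreq
  by_contra hne
  obtain ⟨M, hM⟩ := ENNReal.exists_nat_gt hne
  have hM2 : (M : ℝ≥0∞) ≤ 2 ^ M := by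
    exact_mod_cast (Nat.lt_two_pow_self (n := M)).le
  exact absurd (key M) (not_le.mpr (lt_of_lt_of_le hM hM2))
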